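/- Let R be a Noetherian commutative ring of Krull dimension 1. Then there exists a multiplicative subset S ⊆ R such that the ring S⁻¹R is Artinian and, for every s ∈ S, the ring R/sR is Artinian. Moreover, if Spec R is countable, S can be chosen to be countable. -/

import Mathlib

universe u v

open Ideal

section Aux

variable {R : Type*} [CommRing R]

theorem aux_isArtinian_of_surjective_algebraMap {S M : Type*} [CommRing S] [Algebra R S]
    [AddCommGroup M] [Module R M] [Module S M] [IsScalarTower R S M]
    (hsurj : Function.Surjective (algebraMap R S)) (h : IsArtinian S M) : IsArtinian R M := by
  let g : Submodule R M → Submodule S M := fun p =>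
    { carrier := p
      add_mem' := fun ha hb => p.add_mem ha hb
      zero_mem' := p.zero_mem
      smul_mem' := by
        intro c n hn
        obtain ⟨r, rfl⟩ := hsurj c
        rw [algebraMap_smul]
        exact p.smul_mem r hn }
  have hle : ∀ p q : Submodule R M, g p ≤ g q ↔ p ≤ q := fun p q => Iff.rfl
  have hmono : StrictMono g := fun p q hpq =>
    lt_of_le_not_ge ((hle p q).mpr hpq.le) fun hc => hpq.not_ge ((hle q p).mp hc)
  exact hmono.wellFoundedLT

theorem aux_artinian_of_multiset_prod :
    ∀ (s : Multiset (Ideal R)) (M : Type v) [AddCommGroup M] [Module R M],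
      (∀ I ∈ s, I.IsMaximal) → s.prod • (⊤ : Submodule R M) = ⊥ →
      IsNoetherian R M → IsArtinian R M := by
  intro s
  induction s using Multiset.induction with
  | empty =>
    intro M _ _ _ hbot _
    rw [Multiset.prod_zero, Ideal.one_eq_top, Submodule.top_smul] at hbot
    haveI : Subsingleton M := by
      refine subsingleton_of_forall_eq 0 fun m => ?_
      have : m ∈ (⊥ : Submodule R M) := hbot ▸ Submodule.mem_top
      simpa using this
    haveI : Finite M := Finite.of_subsingleton
    exact isArtinian_of_finite
  | cons I s ih =>
    intro M _ _ hmax hbot hnoeth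
    haveI := hnoeth
    have hImax : I.IsMaximal := hmax I (Multiset.mem_cons_self _ _)
    haveI := hImax
    set N : Submodule R M := s.prod • ⊤ with hN
    have hIN : I • N = ⊥ := by
      rw [hN, ← mul_smul, ← Multiset.prod_cons]; exact hbot
    have hq : IsArtinian R (M ⧸ N) := by
      refine ih (M ⧸ N) (fun J hJ => hmax J (Multiset.mem_cons_of_mem hJ)) ?_ inferInstance
      have htop : (⊤ : Submodule R (M ⧸ N)) = Submodule.map N.mkQ ⊤ := by
        rw [Submodule.map_top, Submodule.range_mkQ]
      rw [htop, ← Submodule.map_smul'', ← hN]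
      rw [eq_bot_iff]
      rintro x hx
      obtain ⟨y, hy, rfl⟩ := hx
      simpa using (Submodule.Quotient.mk_eq_zero N).mpr hy
    have htor : Module.IsTorsionBySet R N I := by
      intro x c
      have hm : (c : R) • (x : M) ∈ I • N := Submodule.smul_mem_smul c.2 x.2
      rw [hIN] at hm
      exact Subtype.ext (by simpa using hm)
    letI : Module (R ⧸ I) N := htor.module
    haveI : IsScalarTower R (R ⧸ I) N := htor.isScalarTower
    letI : Field (R ⧸ I) := Ideal.Quotient.field I
    haveI : IsNoetherian (R ⧸ I) N := isNoetherian_of_tower R inferInstance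
    haveI : Module.Finite (R ⧸ I) N := Module.finite_def.mpr (IsNoetherian.noetherian ⊤)
    haveI : IsArtinian (R ⧸ I) N := isArtinian_of_fg_of_artinian' (R := R ⧸ I)
    haveI hNart : IsArtinian R N := by
      refine aux_isArtinian_of_surjective_algebraMap ?_ this
      rw [Ideal.Quotient.algebraMap_eq]
      exact Ideal.Quotient.mk_surjective
    exact isArtinian_of_range_eq_ker N.subtype N.mkQ
      (by rw [Submodule.ker_mkQ, Submodule.range_subtype])

theorem aux_smul_top (I : Ideal R) : I • (⊤ : Submodule R R) = I := by
  apply le_antisymm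
  · exact Submodule.smul_le.mpr fun r hr n _ => by
      simpa [smul_eq_mul] using I.mul_mem_right n hr
  · intro x hx
    simpa [smul_eq_mul] using Submodule.smul_mem_smul hx (Submodule.mem_top (x := (1 : R)))

theorem aux_hopkins (A : Type v) [CommRing A] [IsNoetherianRing A]
    (h : ∀ P : Ideal A, P.IsPrime → P.IsMaximal) : IsArtinianRing A := by
  obtain ⟨n, hn⟩ := IsNoetherianRing.isNilpotent_nilradical A
  have hfin := minimalPrimes.finite_of_isNoetherianRing A
  set F := hfin.toFinset with hF
  have hprodle : F.prod id ≤ nilradical A := by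
    refine le_trans Ideal.prod_le_inf ?_
    have : nilradical A = sInf (minimalPrimes A) := by
      unfold minimalPrimes
      rw [Ideal.sInf_minimalPrimes, ← Submodule.zero_eq_bot]
      rfl
    rw [this]
    refine le_sInf fun p hp => ?_
    exact Finset.inf_le (hfin.mem_toFinset.mpr hp)
  have hprodbot : ((n + 1) • F.val).prod = ⊥ := by
    rw [Multiset.prod_nsmul]
    have h1 : F.val.prod = F.prod id := by
      rw [Finset.prod_eq_multiset_prod, Multiset.map_id]
    rw [h1]
    refine le_bot_iff.mp ?_
    calc F.prod id ^ (n + 1) ≤ nilradical A ^ (n + 1) := Ideal.pow_right_mono hprodle _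
      _ = nilradical A ^ n * nilradical A := pow_succ _ _
      _ = ⊥ := by rw [hn, Submodule.zero_eq_bot, bot_mul]
  refine aux_artinian_of_multiset_prod ((n + 1) • F.val) A ?_ ?_ inferInstance
  · intro I hI
    have hIF : I ∈ F.val := by
      rcases (Multiset.mem_nsmul).mp hI with ⟨-, h'⟩
      exact h'
    have hImin : I ∈ minimalPrimes A := hfin.mem_toFinset.mp hIF
    exact h I hImin.1.1
  · rw [hprodbot, aux_smul_top]

theorem aux_no_chain (R : Type u) [CommRing R] (hdim : ringKrullDim R = 1)
    {p q r : Ideal R} (hp : p.IsPrime) (hq : q.IsPrime) (hr : r.IsPrime)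
    (h1 : p < q) (h2 : q < r) : False := by
  let x₀ : PrimeSpectrum R := ⟨p, hp⟩
  let x₁ : PrimeSpectrum R := ⟨q, hq⟩
  let x₂ : PrimeSpectrum R := ⟨r, hr⟩
  have hx1 : x₀ < x₁ := h1
  have hx2 : x₁ < x₂ := h2
  let c : LTSeries (PrimeSpectrum R) :=
    ((RelSeries.singleton _ x₀).snoc x₁ (by simpa using hx1)).snoc x₂ (by simpa using hx2)
  have hlen := Order.LTSeries.length_le_krullDim c
  have hckd : Order.krullDim (PrimeSpectrum R) = 1 := hdim
  rw [hckd] at hlen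
  have : ((2 : ℕ) : WithBot (WithTop ℕ)) ≤ 1 := hlen
  norm_num at this

theorem aux_loc_prime_max (R : Type u) [CommRing R] (S : Submonoid R)
    (h2 : ∀ p : Ideal R, p.IsPrime → Disjoint (S : Set R) (p : Set R) → p ∈ minimalPrimes R)
    (P : Ideal (Localization S)) (hP : P.IsPrime) : P.IsMaximal := by
  obtain ⟨m, hm, hPm⟩ := P.exists_le_maximal hP.ne_top
  have hmP : m.IsPrime := hm.isPrime
  have h₁ := (IsLocalization.isPrime_iff_isPrime_disjoint S (Localization S) P).mp hP
  have h₂ := (IsLocalization.isPrime_iff_isPrime_disjoint S (Localization S) m).mp hmP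
  have hp := h2 _ h₁.1 h₁.2
  have hq := h2 _ h₂.1 h₂.2
  have hle : P.comap (algebraMap R (Localization S)) ≤ m.comap (algebraMap R (Localization S)) :=
    Ideal.comap_mono hPm
  have heq : P.comap (algebraMap R (Localization S)) = m.comap (algebraMap R (Localization S)) :=
    le_antisymm hle (hq.2 ⟨h₁.1, bot_le⟩ hle)
  have hPeq : P = m := by
    have e1 := IsLocalization.map_comap S (Localization S) P
    have e2 := IsLocalization.map_comap S (Localization S) m
    rw [← e1, show Ideal.under R P = Ideal.under R m from heq, e2]
  exact hPeq ▸ hm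

theorem aux_quot_prime_max (R : Type u) [CommRing R] (hdim : ringKrullDim R = 1) {s : R}
    (hs : ∀ q ∈ minimalPrimes R, s ∉ q)
    (P : Ideal (R ⧸ Ideal.span ({s} : Set R))) (hP : P.IsPrime) : P.IsMaximal := by
  set f := Ideal.Quotient.mk (Ideal.span ({s} : Set R)) with hf
  obtain ⟨m, hm, hPm⟩ := P.exists_le_maximal hP.ne_top
  have hmP : m.IsPrime := hm.isPrime
  have hpP : (P.comap f).IsPrime := hP.comap f
  have hqP : (m.comap f).IsPrime := hmP.comap f
  have hsP : s ∈ P.comap f := by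
    show f s ∈ P
    have hz : f s = 0 := Ideal.Quotient.eq_zero_iff_mem.mpr (Ideal.subset_span rfl)
    rw [hz]; exact P.zero_mem
  have hsm : s ∈ m.comap f := Ideal.comap_mono hPm hsP
  have hpnm : P.comap f ∉ minimalPrimes R := fun h => hs _ h hsP
  have hqnm : m.comap f ∉ minimalPrimes R := fun h => hs _ h hsm
  obtain ⟨p₀, hp₀, hp₀le⟩ := Ideal.exists_minimalPrimes_le (bot_le (a := P.comap f))
  have hp₀prime : p₀.IsPrime := hp₀.1.1
  have hpq : P.comap f = m.comap f := by
    by_contra hne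
    exact aux_no_chain R hdim hp₀prime hpP hqP
      (lt_of_le_of_ne hp₀le fun h => hpnm (h ▸ hp₀))
      (lt_of_le_of_ne (Ideal.comap_mono hPm) hne)
  have hPeq : P = m := by
    have e1 := Ideal.map_comap_of_surjective f Ideal.Quotient.mk_surjective P
    have e2 := Ideal.map_comap_of_surjective f Ideal.Quotient.mk_surjective m
    rw [← e1, hpq, e2]
  exact hPeq ▸ hm

/-- prime avoidance application -/
theorem aux_exists_avoid (R : Type u) [CommRing R] [IsNoetherianRing R]
    {p : Ideal R} (hp : p.IsPrime) (hnm : p ∉ minimalPrimes R) :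
    ∃ x ∈ p, ∀ q ∈ minimalPrimes R, x ∉ q := by
  have hfin := minimalPrimes.finite_of_isNoetherianRing R
  by_contra hcon
  push_neg at hcon
  have hsub : (p : Set R) ⊆ ⋃ q ∈ (hfin.toFinset : Set (Ideal R)), (q : Set R) := by
    intro x hx
    obtain ⟨q, hq, hxq⟩ := hcon x hx
    exact Set.mem_biUnion (hfin.mem_toFinset.mpr hq) hxq
  rw [Ideal.subset_union_prime p p (fun i hi _ _ => (hfin.mem_toFinset.mp hi).1.1)] at hsub
  obtain ⟨q, hq, hpq⟩ := hsub
  have hqmin := hfin.mem_toFinset.mp hq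
  have : p = q := le_antisymm hpq (hqmin.2 ⟨hp, bot_le⟩ hpq)
  exact hnm (this ▸ hqmin)

theorem aux_key (R : Type u) [CommRing R] [IsNoetherianRing R]
    (hdim : ringKrullDim R = 1) (S : Submonoid R)
    (h1 : ∀ s ∈ S, ∀ q ∈ minimalPrimes R, s ∉ q)
    (h2 : ∀ p : Ideal R, p.IsPrime → Disjoint (S : Set R) (p : Set R) → p ∈ minimalPrimes R) :
    IsArtinianRing (Localization S) ∧ ∀ s ∈ S, IsArtinianRing (R ⧸ Ideal.span {s}) := by
  constructor
  · haveI : IsNoetherianRing (Localization S) :=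
      IsLocalization.isNoetherianRing S (Localization S) inferInstance
    exact aux_hopkins _ (fun P hP => aux_loc_prime_max R S h2 P hP)
  · intro s hsS
    exact aux_hopkins _ (fun P hP => aux_quot_prime_max R hdim (fun q hq => h1 s hsS q hq) P hP)

end Aux

/-- For a Noetherian commutative ring `R` of Krull dimension `1` there is a multiplicative
subset `S ⊆ R` such that `S⁻¹R` is Artinian and `R/sR` is Artinian for all `s ∈ S`;
moreover if `Spec R` is countable, `S` can be chosen countable. -/
theorem stmt10 (R : Type u) [CommRing R] [IsNoetherianRing R]
    (hdim : ringKrullDim R = 1) :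
    (∃ S : Submonoid R, IsArtinianRing (Localization S) ∧
      ∀ s ∈ S, IsArtinianRing (R ⧸ Ideal.span {s})) ∧
    (Countable (PrimeSpectrum R) →
      ∃ S : Submonoid R, Countable S ∧ IsArtinianRing (Localization S) ∧
        ∀ s ∈ S, IsArtinianRing (R ⧸ Ideal.span {s})) := by
  constructor
  · -- S = complement of union of minimal primes
    refine ⟨{ carrier := {x | ∀ q ∈ minimalPrimes R, x ∉ q}
              one_mem' := fun q hq => hq.1.1.ne_top ∘ (Ideal.eq_top_iff_one q).mpr
              mul_mem' := by
                intro a b ha hb q hq hab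
                rcases hq.1.1.mem_or_mem hab with h | h
                · exact ha q hq h
                · exact hb q hq h }, ?_⟩
    refine aux_key R hdim _ (fun s hsS => hsS) ?_
    intro p hp hdisj
    by_contra hnm
    obtain ⟨x, hxp, hxa⟩ := aux_exists_avoid R hp hnm
    exact Set.disjoint_left.mp hdisj hxa hxp
  · intro hcount
    -- choose, for each non-minimal prime, an element avoiding all minimal primes
    classical
    let T : Set (PrimeSpectrum R) := {q | q.asIdeal ∉ minimalPrimes R}
    have hchoice : ∀ q : T, ∃ x, x ∈ q.1.asIdeal ∧ ∀ p ∈ minimalPrimes R, x ∉ p := by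
      rintro ⟨q, hq⟩
      obtain ⟨x, h₁, h₂⟩ := aux_exists_avoid R q.isPrime hq
      exact ⟨x, h₁, h₂⟩
    choose g hg1 hg2 using hchoice
    refine ⟨Submonoid.closure (Set.range g), ?_, ?_⟩
    · -- countability
      rw [Submonoid.closure_eq_mrange]
      have : Countable (Set.range g) := Set.countable_range g
      have : Countable (FreeMonoid (Set.range g)) := by
        unfold FreeMonoid
        infer_instance
      have hcr : Set.Countable (Set.range (FreeMonoid.lift
          (Subtype.val : Set.range g → R))) := Set.countable_range _
      have hset : ((MonoidHom.mrange (FreeMonoid.lift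
          (Subtype.val : Set.range g → R))) : Set R).Countable := by
        rw [MonoidHom.coe_mrange]
        exact hcr
      exact hset.to_subtype
    · refine aux_key R hdim _ ?_ ?_
      · -- all elements avoid minimal primes
        intro s hsS q hq
        have : s ∈ ({x | ∀ q ∈ minimalPrimes R, x ∉ q} : Set R) → s ∉ q := fun h => h q hq
        refine this ?_
        have hsub : Set.range g ⊆ {x | ∀ q ∈ minimalPrimes R, x ∉ q} := by
          rintro x ⟨i, rfl⟩ p hp
          exact hg2 i p hp
        have hS0 : Submonoid.closure (Set.range g) ≤
            { carrier := {x | ∀ q ∈ minimalPrimes R, x ∉ q}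
              one_mem' := fun q hq => hq.1.1.ne_top ∘ (Ideal.eq_top_iff_one q).mpr
              mul_mem' := by
                intro a b ha hb q hq hab
                rcases hq.1.1.mem_or_mem hab with h | h
                · exact ha q hq h
                · exact hb q hq h } := Submonoid.closure_le.mpr hsub
        exact hS0 hsS
      · -- every prime disjoint from S is minimal
        intro p hp hdisj
        by_contra hnm
        have hpT : (⟨p, hp⟩ : PrimeSpectrum R) ∈ T := hnm
        have hgen : g ⟨⟨p, hp⟩, hpT⟩ ∈ Submonoid.closure (Set.range g) :=
          Submonoid.subset_closure ⟨_, rfl⟩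
        exact Set.disjoint_left.mp hdisj hgen (hg1 ⟨⟨p, hp⟩, hpT⟩)
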